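/- arXiv:0906.2208 — 2 statements merged into one kernel-verified Lean document; each statement's English description precedes it below -/
import Mathlib

section
/- Let ω ∈ (0,∞)ⁿ be a weight vector with inverted weights φ = (1/ω₁,…,1/ωₙ). Let r₁,…,r_d ∈ ℝⁿ and C = {x ∈ ℝⁿ : (rᵢ, x) ≥ 0 for all i ∈ [d]}. Fix an index i and suppose (rᵢ, r_j)_φ ≤ 0 for all j ≠ i. If y ∈ ℝⁿ satisfies (rᵢ, y) ≤ 0, then the weighted projection π_C(y; ω) lies in the wall H = {x : (rᵢ, x) = 0}. -/
/-- If `(rᵢ, rⱼ)_φ ≤ 0` for all `j ≠ i` (φ the inverted weights) and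
`(rᵢ, y) ≤ 0`, then the weighted projection of `y` onto the chamber
`C = {x : (rⱼ,x) ≥ 0 ∀j}` lies in the wall `H = {x : (rᵢ,x) = 0}`. -/
theorem stmt_2 (n d : ℕ) (ω : Fin n → ℝ) (hω : ∀ k, 0 < ω k)
    (r : Fin d → Fin n → ℝ) (i : Fin d)
    (hneg : ∀ j, j ≠ i → ∑ k, (1 / ω k) * r i k * r j k ≤ 0)
    (y : Fin n → ℝ) (hy : ∑ k, r i k * y k ≤ 0)
    (z : Fin n → ℝ)
    (hzC : ∀ j, 0 ≤ ∑ k, r j k * z k)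
    (hzmin : ∀ x : Fin n → ℝ, (∀ j, 0 ≤ ∑ k, r j k * x k) →
      ∑ k, ω k * (z k - y k) ^ 2 ≤ ∑ k, ω k * (x k - y k) ^ 2) :
    ∑ k, r i k * z k = 0 := by
  by_contra hne
  have hc : 0 < ∑ k, r i k * z k := lt_of_le_of_ne (hzC i) (Ne.symm hne)
  set c : ℝ := ∑ k, r i k * z k with hcdef
  set N : ℝ := ∑ k, (1 / ω k) * r i k * r i k with hNdef
  have hterm : ∀ k : Fin n, 0 ≤ (1 / ω k) * r i k * r i k := by
    intro k
    have hpos := hω k; have h1 : (0:ℝ) ≤ 1 / ω k := by positivity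
    rw [mul_assoc]
    exact mul_nonneg h1 (mul_self_nonneg _)
  have hNnonneg : 0 ≤ N := Finset.sum_nonneg fun k _ => hterm k
  have hNpos : 0 < N := by
    rcases hNnonneg.lt_or_eq with h | h
    · exact h
    · exfalso
      have hzero : ∀ k, r i k = 0 := by
        intro k
        have h0 := (Finset.sum_eq_zero_iff_of_nonneg (fun k _ => hterm k)).mp h.symm k
          (Finset.mem_univ k)
        have hpos := hω k; have hωk : (1 : ℝ) / ω k ≠ 0 := by positivity
        by_contra hr
        exact (mul_ne_zero (mul_ne_zero hωk hr) hr) h0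
      have : c = 0 := by simp [hcdef, hzero]
      linarith
  set t : ℝ := c / N with htdef
  have ht : 0 < t := div_pos hc hNpos
  have htN : t * N = c := div_mul_cancel₀ c hNpos.ne'
  have hsum : ∀ j, ∑ k, r j k * (z k - t * (r i k / ω k))
      = (∑ k, r j k * z k) - t * ∑ k, (1 / ω k) * r i k * r j k := by
    intro j
    rw [Finset.mul_sum, ← Finset.sum_sub_distrib]
    exact Finset.sum_congr rfl fun k _ => by ring
  have hxC : ∀ j, 0 ≤ ∑ k, r j k * (z k - t * (r i k / ω k)) := by
    intro j
    rw [hsum j]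
    by_cases hji : j = i
    · subst hji
      rw [← hNdef, ← hcdef, htN]
      simp
    · have h1 := hneg j hji
      have h2 : 0 ≤ -(t * ∑ k, (1 / ω k) * r i k * r j k) := by
        have := mul_nonneg ht.le (neg_nonneg.mpr h1)
        linarith
      linarith [hzC j]
  have hexp : ∑ k, ω k * ((z k - t * (r i k / ω k)) - y k) ^ 2
      = (∑ k, ω k * (z k - y k) ^ 2) - 2 * t * ((∑ k, r i k * z k) - ∑ k, r i k * y k)
        + t ^ 2 * N := by
    have hkey : ∀ k : Fin n, ω k * ((z k - t * (r i k / ω k)) - y k) ^ 2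
        = ω k * (z k - y k) ^ 2 - 2 * t * (r i k * z k - r i k * y k)
          + t ^ 2 * ((1 / ω k) * r i k * r i k) := by
      intro k
      have hωk : ω k ≠ 0 := (hω k).ne'
      field_simp
      ring
    calc ∑ k, ω k * ((z k - t * (r i k / ω k)) - y k) ^ 2
        = ∑ k, (ω k * (z k - y k) ^ 2 - 2 * t * (r i k * z k - r i k * y k)
            + t ^ 2 * ((1 / ω k) * r i k * r i k)) :=
          Finset.sum_congr rfl fun k _ => hkey k
      _ = _ := by
          rw [Finset.sum_add_distrib, Finset.sum_sub_distrib, ← Finset.mul_sum,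
            ← Finset.mul_sum, Finset.sum_sub_distrib, hNdef]
  have hmin := hzmin (fun k => z k - t * (r i k / ω k)) hxC
  rw [hexp] at hmin
  have ht2N : t ^ 2 * N = t * c := by rw [sq, mul_assoc, htN]
  nlinarith [mul_pos ht hc, mul_nonneg ht.le (neg_nonneg.mpr hy)]
end

section
/- Let ω ∈ (0,∞)ⁿ with φ = (1/ω₁,…,1/ωₙ), let r₁,…,r_d ∈ ℝⁿ, C = {x : (rᵢ,x) ≥ 0 ∀i}, and fix i with (rᵢ, r_j)_φ ≤ 0 for all j ≠ i. If y satisfies (rᵢ, y) ≤ 0 and H = {x : (rᵢ,x) = 0}, then π_C(y; ω) = π_C(π_H(y; ω); ω), i.e., projecting y onto C with weights ω factors through the weighted projection onto the wall H. -/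
private lemma lin_zero_aux (A B : ℝ) (hB : 0 ≤ B)
    (h : ∀ t : ℝ, 0 ≤ 2*t*A + t^2*B) : A = 0 := by
  have hB1 : (0:ℝ) < B + 1 := by linarith
  have h1 := h (-A/(B+1))
  have key : 0 ≤ (-(A^2))*(B+2) := by
    have e : (2*(-A/(B+1))*A + (-A/(B+1))^2*B) * (B+1)^2 = (-(A^2))*(B+2) := by
      field_simp
      ring
    calc (0:ℝ) ≤ (2*(-A/(B+1))*A + (-A/(B+1))^2*B) * (B+1)^2 :=
          mul_nonneg h1 (sq_nonneg _)
      _ = _ := e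
  have hA2 : A^2 = 0 := le_antisymm (by nlinarith) (sq_nonneg A)
  exact pow_eq_zero_iff (two_ne_zero) |>.mp hA2

private lemma quad_nonneg_aux (A B : ℝ) (hB : 0 ≤ B)
    (h : ∀ t : ℝ, 0 < t → t ≤ 1 → 0 ≤ 2*t*A + t^2*B) : 0 ≤ A := by
  by_contra hA
  push_neg at hA
  rcases eq_or_lt_of_le hB with hB0 | hB0
  · have := h 1 one_pos le_rfl
    nlinarith
  · set t := min 1 (-A/B) with ht
    have ht0 : 0 < t := lt_min one_pos (div_pos (neg_pos.2 hA) hB0)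
    have ht1 : t ≤ 1 := min_le_left _ _
    have h2 := h t ht0 ht1
    have htB : t * B ≤ -A := by
      have hle : t ≤ -A/B := min_le_right _ _
      have : t * B ≤ (-A/B) * B := by nlinarith
      calc t*B ≤ (-A/B)*B := this
        _ = -A := by field_simp
    nlinarith

/-- Under the hypotheses of Lemma 2 (projection lemma), the weighted
projection of `y` onto `C` factors through the weighted projection onto
the wall `H = {x : (rᵢ,x) = 0}`:
`π_C(y;ω) = π_C(π_H(y;ω);ω)`. -/
theorem stmt_3 (n d : ℕ) (ω : Fin n → ℝ) (hω : ∀ k, 0 < ω k)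
    (r : Fin d → Fin n → ℝ) (i : Fin d)
    (hneg : ∀ j, j ≠ i → ∑ k, (1 / ω k) * r i k * r j k ≤ 0)
    (y : Fin n → ℝ) (hy : ∑ k, r i k * y k ≤ 0)
    -- `q = π_H(y;ω)` : the weighted projection of `y` onto the wall `H`
    (q : Fin n → ℝ) (hqH : ∑ k, r i k * q k = 0)
    (hqmin : ∀ x : Fin n → ℝ, (∑ k, r i k * x k = 0) →
      ∑ k, ω k * (q k - y k) ^ 2 ≤ ∑ k, ω k * (x k - y k) ^ 2)
    -- `p = π_C(y;ω)` : the weighted projection of `y` onto the chamber `C`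
    (p : Fin n → ℝ) (hpC : ∀ j, 0 ≤ ∑ k, r j k * p k)
    (hpmin : ∀ x : Fin n → ℝ, (∀ j, 0 ≤ ∑ k, r j k * x k) →
      ∑ k, ω k * (p k - y k) ^ 2 ≤ ∑ k, ω k * (x k - y k) ^ 2)
    -- `z = π_C(q;ω)` : the weighted projection of `q` onto `C`
    (z : Fin n → ℝ) (hzC : ∀ j, 0 ≤ ∑ k, r j k * z k)
    (hzmin : ∀ x : Fin n → ℝ, (∀ j, 0 ≤ ∑ k, r j k * x k) →
      ∑ k, ω k * (z k - q k) ^ 2 ≤ ∑ k, ω k * (x k - q k) ^ 2) :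
    p = z := by
  have hωne : ∀ k, ω k ≠ 0 := fun k => (hω k).ne'
  -- Step 2: the "orthogonality" of q - y to the wall
  have hwv : ∀ v : Fin n → ℝ, (∑ k, r i k * v k = 0) →
      ∑ k, (ω k * (q k - y k)) * v k = 0 := by
    intro v hv
    have hB : 0 ≤ ∑ k, ω k * v k ^ 2 :=
      Finset.sum_nonneg fun k _ => mul_nonneg (hω k).le (sq_nonneg _)
    apply lin_zero_aux _ _ hB
    intro t
    have hmem : ∑ k, r i k * (q k + t * v k) = 0 := by
      have e : ∑ k, r i k * (q k + t * v k)
          = (∑ k, r i k * q k) + t * ∑ k, r i k * v k := by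
        rw [Finset.mul_sum, ← Finset.sum_add_distrib]
        exact Finset.sum_congr rfl fun k _ => by ring
      rw [e, hqH, hv]; ring
    have h1 := hqmin _ hmem
    have expand : ∑ k, ω k * (q k + t * v k - y k)^2
        = (∑ k, ω k * (q k - y k)^2) + 2*t*(∑ k, (ω k * (q k - y k)) * v k)
          + t^2*(∑ k, ω k * v k ^ 2) := by
      rw [Finset.mul_sum, Finset.mul_sum, ← Finset.sum_add_distrib, ← Finset.sum_add_distrib]
      exact Finset.sum_congr rfl fun k _ => by ring
    rw [expand] at h1
    linarith
  -- Step 3: q - y is a nonneg multiple of (1/ω)·r i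
  obtain ⟨c, hc, hw⟩ : ∃ c : ℝ, 0 ≤ c ∧ ∀ k, ω k * (q k - y k) = c * r i k := by
    by_cases hS' : (∑ k, r i k * r i k) = 0
    · -- r i = 0
      have hri : ∀ k, r i k = 0 := by
        intro k
        have h0 := (Finset.sum_eq_zero_iff_of_nonneg
          (fun k _ => mul_self_nonneg (r i k))).mp hS' k (Finset.mem_univ k)
        exact mul_self_eq_zero.mp h0
      refine ⟨0, le_rfl, ?_⟩
      have h0 : ∑ k, (ω k * (q k - y k)) * (q k - y k) = 0 := by
        apply hwv
        simp [hri]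
      have hnn : ∀ k ∈ Finset.univ, 0 ≤ ω k * (q k - y k) * (q k - y k) := by
        intro k _
        have h5 : 0 ≤ ω k * (q k - y k)^2 := mul_nonneg (hω k).le (sq_nonneg _)
        nlinarith
      have h0' : ∀ k, ω k * (q k - y k) * (q k - y k) = 0 := fun k =>
        (Finset.sum_eq_zero_iff_of_nonneg hnn).mp h0 k (Finset.mem_univ k)
      intro k
      have hq : q k - y k = 0 := by
        by_contra hne
        exact (mul_ne_zero (mul_ne_zero (hωne k) hne) hne) (h0' k)
      rw [hq, hri k]; ring
    · set S' := ∑ k, r i k * r i k with hS'def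
      set c := (∑ k, r i k * (ω k * (q k - y k))) / S' with hcdef
      have hveq : ∀ k, ω k * (q k - y k) = c * r i k := by
        have hv : ∑ k, r i k * ((ω k * (q k - y k)) - c * r i k) = 0 := by
          have e : ∑ k, r i k * ((ω k * (q k - y k)) - c * r i k)
              = (∑ k, r i k * (ω k * (q k - y k))) - c * ∑ k, r i k * r i k := by
            rw [Finset.mul_sum, ← Finset.sum_sub_distrib]
            exact Finset.sum_congr rfl fun k _ => by ring
          rw [e, hcdef]
          field_simp
          simp only [hS'def, sq, sub_self, mul_zero]
        have h0 := hwv _ hv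
        have hsq : ∑ k, ((ω k * (q k - y k)) - c * r i k)^2 = 0 := by
          have e : ∑ k, ((ω k * (q k - y k)) - c * r i k)^2
              = (∑ k, (ω k * (q k - y k)) * ((ω k * (q k - y k)) - c * r i k))
                - c * ∑ k, r i k * ((ω k * (q k - y k)) - c * r i k) := by
            rw [Finset.mul_sum, ← Finset.sum_sub_distrib]
            exact Finset.sum_congr rfl fun k _ => by ring
          rw [e, h0, hv]; ring
        intro k
        have h1 := (Finset.sum_eq_zero_iff_of_nonneg
          (fun k _ => sq_nonneg _)).mp hsq k (Finset.mem_univ k)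
        have := pow_eq_zero_iff (two_ne_zero) |>.mp h1
        linarith
      refine ⟨c, ?_, hveq⟩
      -- c ≥ 0
      have hSpos : 0 < ∑ k, (1/ω k) * r i k * r i k := by
        rcases Finset.exists_ne_zero_of_sum_ne_zero hS' with ⟨k0, _, hk0⟩
        have hk0' : r i k0 ≠ 0 := by
          intro h; exact hk0 (by rw [h]; ring)
        have hterm : ∀ k ∈ Finset.univ, 0 ≤ (1/ω k) * r i k * r i k := by
          intro k _
          have h6 : (0:ℝ) < 1/ω k := one_div_pos.mpr (hω k)
          nlinarith [mul_self_nonneg (r i k)]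
        apply Finset.sum_pos' hterm
        refine ⟨k0, Finset.mem_univ k0, ?_⟩
        have h6 : (0:ℝ) < 1/ω k0 := one_div_pos.mpr (hω k0)
        have h7 : 0 < r i k0 * r i k0 := mul_self_pos.mpr hk0'
        nlinarith
      have e1 : ∑ k, r i k * (q k - y k) = c * ∑ k, (1/ω k) * r i k * r i k := by
        rw [Finset.mul_sum]
        refine Finset.sum_congr rfl fun k _ => ?_
        have hv := hveq k
        have hωk : ω k ≠ 0 := hωne k
        field_simp
        linear_combination (r i k) * hv
      have e2 : ∑ k, r i k * (q k - y k) = - ∑ k, r i k * y k + 0 := by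
        rw [← hqH, ← Finset.sum_neg_distrib, ← Finset.sum_add_distrib]
        exact Finset.sum_congr rfl fun k _ => by ring
      have : 0 ≤ c * ∑ k, (1/ω k) * r i k * r i k := by
        rw [← e1, e2]; linarith
      by_contra hcneg
      push_neg at hcneg
      nlinarith [this, hSpos]
  -- Step 4: (r i, z) = 0
  have hriz : ∑ k, r i k * z k = 0 := by
    by_cases hS' : (∑ k, r i k * r i k) = 0
    · have hri : ∀ k, r i k = 0 := by
        intro k
        have h0 := (Finset.sum_eq_zero_iff_of_nonneg
          (fun k _ => mul_self_nonneg (r i k))).mp hS' k (Finset.mem_univ k)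
        exact mul_self_eq_zero.mp h0
      simp [hri]
    · have hSpos : 0 < ∑ k, (1/ω k) * r i k * r i k := by
        rcases Finset.exists_ne_zero_of_sum_ne_zero hS' with ⟨k0, _, hk0⟩
        have hk0' : r i k0 ≠ 0 := by
          intro h; exact hk0 (by rw [h]; ring)
        have hterm : ∀ k ∈ Finset.univ, 0 ≤ (1/ω k) * r i k * r i k := by
          intro k _
          have h6 : (0:ℝ) < 1/ω k := one_div_pos.mpr (hω k)
          nlinarith [mul_self_nonneg (r i k)]
        apply Finset.sum_pos' hterm
        refine ⟨k0, Finset.mem_univ k0, ?_⟩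
        have h6 : (0:ℝ) < 1/ω k0 := one_div_pos.mpr (hω k0)
        have h7 : 0 < r i k0 * r i k0 := mul_self_pos.mpr hk0'
        nlinarith
      set S := ∑ k, (1/ω k) * r i k * r i k with hSdef
      set μ := (∑ k, r i k * z k) / S with hμdef
      have hμ0 : 0 ≤ μ := div_nonneg (hzC i) hSpos.le
      set z' := fun k => z k - μ * ((1/ω k) * r i k) with hz'def
      have hz'mem : ∀ j, 0 ≤ ∑ k, r j k * z' k := by
        intro j
        have e : ∑ k, r j k * z' k
            = (∑ k, r j k * z k) - μ * ∑ k, (1/ω k) * r i k * r j k := by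
          rw [Finset.mul_sum, ← Finset.sum_sub_distrib]
          exact Finset.sum_congr rfl fun k _ => by simp only [hz'def]; ring
        rw [e]
        by_cases hj : j = i
        · rw [hj, ← hSdef]
          have hμS : μ * S = ∑ k, r i k * z k := by
            rw [hμdef]; field_simp
          linarith
        · have := hneg j hj
          have := hzC j
          nlinarith
      have hdist : ∑ k, ω k * (z' k - q k)^2
          = (∑ k, ω k * (z k - q k)^2) - 2*μ*(∑ k, r i k * (z k - q k))
            + μ^2 * S := by
        rw [hSdef, Finset.mul_sum, Finset.mul_sum, ← Finset.sum_sub_distrib,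
          ← Finset.sum_add_distrib]
        refine Finset.sum_congr rfl fun k _ => ?_
        have hωk := hωne k
        simp only [hz'def]
        field_simp
        ring
      have hrzq : ∑ k, r i k * (z k - q k) = μ * S := by
        have e : ∑ k, r i k * (z k - q k)
            = (∑ k, r i k * z k) - ∑ k, r i k * q k := by
          rw [← Finset.sum_sub_distrib]
          exact Finset.sum_congr rfl fun k _ => by ring
        rw [e, hqH, hμdef]
        field_simp
        ring
      have h1 := hzmin _ hz'mem
      rw [hdist, hrzq] at h1
      have hμS : ∑ k, r i k * z k = μ * S := by
        rw [hμdef]; field_simp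
      have hμ2 : μ^2 ≤ 0 := by
        by_contra hμ2
        push_neg at hμ2
        nlinarith [mul_pos hμ2 hSpos]
      have hμ0' : μ = 0 := by
        have h8 : μ^2 = 0 := le_antisymm hμ2 (sq_nonneg μ)
        exact pow_eq_zero_iff (two_ne_zero) |>.mp h8
      rw [hμS, hμ0']; ring
  -- Step 5: variational inequality for z
  have hvz : ∀ x : Fin n → ℝ, (∀ j, 0 ≤ ∑ k, r j k * x k) →
      0 ≤ ∑ k, ω k * (z k - q k) * (x k - z k) := by
    intro x hx
    have hB : 0 ≤ ∑ k, ω k * (x k - z k)^2 :=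
      Finset.sum_nonneg fun k _ => mul_nonneg (hω k).le (sq_nonneg _)
    apply quad_nonneg_aux _ _ hB
    intro t ht0 ht1
    have hmem : ∀ j, 0 ≤ ∑ k, r j k * (z k + t*(x k - z k)) := by
      intro j
      have e : ∑ k, r j k * (z k + t*(x k - z k))
          = (1-t)*(∑ k, r j k * z k) + t*(∑ k, r j k * x k) := by
        rw [Finset.mul_sum, Finset.mul_sum, ← Finset.sum_add_distrib]
        exact Finset.sum_congr rfl fun k _ => by ring
      rw [e]
      have := hzC j
      have := hx j
      nlinarith
    have h1 := hzmin _ hmem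
    have expand : ∑ k, ω k * (z k + t*(x k - z k) - q k)^2
        = (∑ k, ω k * (z k - q k)^2)
          + 2*t*(∑ k, ω k * (z k - q k) * (x k - z k))
          + t^2*(∑ k, ω k * (x k - z k)^2) := by
      rw [Finset.mul_sum, Finset.mul_sum, ← Finset.sum_add_distrib, ← Finset.sum_add_distrib]
      exact Finset.sum_congr rfl fun k _ => by ring
    rw [expand] at h1
    linarith
  -- Step 6: z also minimizes distance to y over C
  have hzminy : ∀ x : Fin n → ℝ, (∀ j, 0 ≤ ∑ k, r j k * x k) →
      ∑ k, ω k * (z k - y k)^2 ≤ ∑ k, ω k * (x k - y k)^2 := by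
    intro x hx
    have hA := hvz x hx
    have hcx : 0 ≤ ∑ k, ω k * (q k - y k) * (x k - z k) := by
      have e : ∑ k, ω k * (q k - y k) * (x k - z k)
          = c * ((∑ k, r i k * x k) - ∑ k, r i k * z k) := by
        rw [← Finset.sum_sub_distrib, Finset.mul_sum]
        refine Finset.sum_congr rfl fun k _ => ?_
        linear_combination (x k - z k) * hw k
      rw [e, hriz]
      have := hx i
      nlinarith
    have hB : 0 ≤ ∑ k, ω k * (x k - z k)^2 :=
      Finset.sum_nonneg fun k _ => mul_nonneg (hω k).le (sq_nonneg _)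
    have expand : ∑ k, ω k * (x k - y k)^2
        = (∑ k, ω k * (z k - y k)^2) + (∑ k, ω k * (x k - z k)^2)
          + 2*(∑ k, ω k * (z k - q k) * (x k - z k))
          + 2*(∑ k, ω k * (q k - y k) * (x k - z k)) := by
      rw [Finset.mul_sum, Finset.mul_sum, ← Finset.sum_add_distrib,
        ← Finset.sum_add_distrib, ← Finset.sum_add_distrib]
      exact Finset.sum_congr rfl fun k _ => by ring
    rw [expand]
    linarith
  -- Step 7: uniqueness via midpoint
  have h1 : ∑ k, ω k * (p k - y k)^2 ≤ ∑ k, ω k * (z k - y k)^2 := hpmin z hzC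
  have h2 := hzminy p hpC
  set m := fun k => (p k + z k)/2 with hmdef
  have hmC : ∀ j, 0 ≤ ∑ k, r j k * m k := by
    intro j
    have e : ∑ k, r j k * m k
        = ((∑ k, r j k * p k) + ∑ k, r j k * z k)/2 := by
      rw [← Finset.sum_add_distrib, Finset.sum_div]
      exact Finset.sum_congr rfl fun k _ => by simp only [hmdef]; ring
    rw [e]
    have := hpC j
    have := hzC j
    linarith
  have h3 := hpmin m hmC
  have expand : ∑ k, ω k * (m k - y k)^2
      = (∑ k, ω k * (p k - y k)^2)/2 + (∑ k, ω k * (z k - y k)^2)/2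
        - (∑ k, ω k * (p k - z k)^2)/4 := by
    rw [Finset.sum_div, Finset.sum_div, Finset.sum_div, ← Finset.sum_add_distrib,
      ← Finset.sum_sub_distrib]
    refine Finset.sum_congr rfl fun k _ => ?_
    simp only [hmdef]
    ring
  rw [expand] at h3
  have hpz : ∑ k, ω k * (p k - z k)^2 ≤ 0 := by linarith
  have hpz0 : ∑ k, ω k * (p k - z k)^2 = 0 :=
    le_antisymm hpz (Finset.sum_nonneg fun k _ => mul_nonneg (hω k).le (sq_nonneg _))
  funext k
  have := (Finset.sum_eq_zero_iff_of_nonneg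
    (fun k _ => mul_nonneg (hω k).le (sq_nonneg _))).mp hpz0 k (Finset.mem_univ k)
  have h4 : (p k - z k)^2 = 0 := by
    rcases mul_eq_zero.mp this with h | h
    · exact absurd h (hωne k)
    · exact h
  have := pow_eq_zero_iff (two_ne_zero) |>.mp h4
  linarith
end
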